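/- Let Q be a partition diagram of type (a,b) and P a partition diagram of type (b,c). Let ∼ be the smallest equivalence relation on Fin a ⊕ Fin b ⊕ Fin c identifying any two elements that lie in a common block of Q (viewed inside the first two summands) or in a common block of P (viewed inside the last two summands). Let α(P,Q) be the number of ∼-equivalence classes contained entirely in the middle summand Fin b, and let P⋆Q be the partition diagram of type (a,c) in which two elements of Fin a ⊕ Fin c lie in the same block if and only if they are ∼-equivalent. Then T_P ∘ T_Q = (n : k)^{α(P,Q)} · T_{P⋆Q} as k-linear maps V^{⊗a} → V^{⊗c}. -/

import Mathlib

open scoped Classical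

/-- A partition diagram of type `(a,b)`: a set partition of `Fin a ⊕ Fin b`
into nonempty blocks. -/
abbrev PartitionDiagram (a b : ℕ) :=
  Finpartition (Finset.univ : Finset (Fin a ⊕ Fin b))

/-- `Sum.elim f g` is constant on every block of `P`. -/
def Compatible {n a b : ℕ} (P : PartitionDiagram a b)
    (f : Fin a → Fin n) (g : Fin b → Fin n) : Prop :=
  ∀ B ∈ P.parts, ∀ x ∈ B, ∀ y ∈ B, Sum.elim f g x = Sum.elim f g y

/-- The linear map `T_P : V^{⊗a} → V^{⊗b}` associated to a partition diagram `P`,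
where `V^{⊗a}` is modelled as the free module on `Fin a → Fin n`, with basis vector
at `f` corresponding to `e_{f(1)} ⊗ ⋯ ⊗ e_{f(a)}`. -/
noncomputable def TP (k : Type*) [CommRing k] (n : ℕ) {a b : ℕ}
    (P : PartitionDiagram a b) :
    ((Fin a → Fin n) → k) →ₗ[k] ((Fin b → Fin n) → k) where
  toFun x g := ∑ f : Fin a → Fin n, if Compatible P f g then x f else 0
  map_add' x y := by
    funext g
    simp only [Pi.add_apply]
    rw [← Finset.sum_add_distrib]
    exact Finset.sum_congr rfl fun f _ => by split <;> simp
  map_smul' c x := by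
    funext g
    simp only [Pi.smul_apply, smul_eq_mul, RingHom.id_apply]
    rw [Finset.mul_sum]
    exact Finset.sum_congr rfl fun f _ => by split <;> simp

/-- The (diagonal) action of `σ ∈ S_n` on `V^{⊗a}`: on basis vectors it sends
`e_{f(1)} ⊗ ⋯ ⊗ e_{f(a)}` to `e_{σ(f(1))} ⊗ ⋯ ⊗ e_{σ(f(a))}`. -/
def permMap (k : Type*) [CommRing k] {n a : ℕ} (σ : Equiv.Perm (Fin n)) :
    ((Fin a → Fin n) → k) →ₗ[k] ((Fin a → Fin n) → k) where
  toFun x f := x fun i => σ⁻¹ (f i)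
  map_add' _ _ := rfl
  map_smul' _ _ := rfl


/-- The relation on `Fin a ⊕ (Fin b ⊕ Fin c)` identifying two elements that lie in a
common block of `Q` (viewed in the first two summands) or in a common block of `P`
(viewed in the last two summands). -/
def midRel {a b c : ℕ} (Q : PartitionDiagram a b) (P : PartitionDiagram b c)
    (x y : Fin a ⊕ (Fin b ⊕ Fin c)) : Prop :=
  (∃ B ∈ Q.parts, ∃ u ∈ B, ∃ v ∈ B,
      x = Sum.elim Sum.inl (fun j => Sum.inr (Sum.inl j)) u ∧
      y = Sum.elim Sum.inl (fun j => Sum.inr (Sum.inl j)) v) ∨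
  (∃ B ∈ P.parts, ∃ u ∈ B, ∃ v ∈ B,
      x = Sum.elim (fun j => Sum.inr (Sum.inl j)) (fun j => Sum.inr (Sum.inr j)) u ∧
      y = Sum.elim (fun j => Sum.inr (Sum.inl j)) (fun j => Sum.inr (Sum.inr j)) v)

/-- `α(P,Q)`: the number of equivalence classes of the equivalence relation generated by
`midRel Q P` that are contained entirely in the middle summand `Fin b`. -/
noncomputable def alphaPQ {a b c : ℕ} (Q : PartitionDiagram a b)
    (P : PartitionDiagram b c) : ℕ :=
  Nat.card {t : Quotient (Relation.EqvGen.setoid (midRel Q P)) //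
    ∀ x : Fin a ⊕ (Fin b ⊕ Fin c),
      Quotient.mk (Relation.EqvGen.setoid (midRel Q P)) x = t →
        ∃ j : Fin b, x = Sum.inr (Sum.inl j)}

section Aux

lemma eqvGen_invariant {α β : Type*} {r : α → α → Prop} {E : α → β}
    (H : ∀ x y, r x y → E x = E y) :
    ∀ x y, Relation.EqvGen r x y → E x = E y := by
  intro x y hxy
  induction hxy with
  | rel _ _ hr => exact H _ _ hr
  | refl => rfl
  | symm _ _ _ ih => exact ih.symm
  | trans _ _ _ _ _ ih1 ih2 => exact ih1.trans ih2

variable {n a b c : ℕ} (Q : PartitionDiagram a b) (P : PartitionDiagram b c)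

lemma compat_iff (f : Fin a → Fin n) (g : Fin b → Fin n) (h : Fin c → Fin n) :
    (Compatible Q f g ∧ Compatible P g h) ↔
      ∀ x y, midRel Q P x y →
        Sum.elim f (Sum.elim g h) x = Sum.elim f (Sum.elim g h) y := by
  constructor
  · rintro ⟨h1, h2⟩ x y (⟨B, hB, u, hu, v, hv, rfl, rfl⟩ | ⟨B, hB, u, hu, v, hv, rfl, rfl⟩)
    · have := h1 B hB u hu v hv
      cases u <;> cases v <;> simpa using this
    · have := h2 B hB u hu v hv
      cases u <;> cases v <;> simpa using this
  · intro H
    constructor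
    · intro B hB u hu v hv
      have := H _ _ (Or.inl ⟨B, hB, u, hu, v, hv, rfl, rfl⟩)
      cases u <;> cases v <;> simpa using this
    · intro B hB u hu v hv
      have := H _ _ (Or.inr ⟨B, hB, u, hu, v, hv, rfl, rfl⟩)
      cases u <;> cases v <;> simpa using this

lemma map_elim (f : Fin a → Fin n) (g : Fin b → Fin n) (h : Fin c → Fin n)
    (p : Fin a ⊕ Fin c) :
    Sum.elim f (Sum.elim g h) (Sum.map id Sum.inr p) = Sum.elim f h p := by
  cases p <;> rfl

lemma count_valid (f : Fin a → Fin n) (h : Fin c → Fin n)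
    (R : PartitionDiagram a c)
    (hR : ∀ x y : Fin a ⊕ Fin c,
      (∃ B ∈ R.parts, x ∈ B ∧ y ∈ B) ↔
        Relation.EqvGen (midRel Q P)
          (Sum.map id Sum.inr x) (Sum.map id Sum.inr y)) :
    Fintype.card {g : Fin b → Fin n // Compatible Q f g ∧ Compatible P g h} =
      if Compatible R f h then n ^ alphaPQ Q P else 0 := by
  set S := Relation.EqvGen.setoid (midRel Q P) with hS
  by_cases hC : Compatible R f h
  · rw [if_pos hC]
    -- the subtype of middle-only classes
    set M := {t : Quotient S //
      ∀ x : Fin a ⊕ (Fin b ⊕ Fin c),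
        Quotient.mk S x = t → ∃ j : Fin b, x = Sum.inr (Sum.inl j)} with hM
    have jspec : ∀ t : M, ∃ j : Fin b, t.1.out = Sum.inr (Sum.inl j) :=
      fun t => t.2 _ (Quotient.out_eq t.1)
    choose jOf hjOf using jspec
    let Φ : {g : Fin b → Fin n // Compatible Q f g ∧ Compatible P g h} →
        (M → Fin n) := fun g t => g.1 (jOf t)
    have hinj : Function.Injective Φ := by
      intro g g' hgg
      have inv1 := eqvGen_invariant ((compat_iff Q P f g.1 h).mp g.2)
      have inv2 := eqvGen_invariant ((compat_iff Q P f g'.1 h).mp g'.2)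
      ext j
      by_cases hm : ∀ x : Fin a ⊕ (Fin b ⊕ Fin c),
          Quotient.mk S x = Quotient.mk S (Sum.inr (Sum.inl j)) →
            ∃ j' : Fin b, x = Sum.inr (Sum.inl j')
      · set t : M := ⟨Quotient.mk S (Sum.inr (Sum.inl j)), hm⟩ with ht
        have heq : Relation.EqvGen (midRel Q P)
            (Sum.inr (Sum.inl j)) (Sum.inr (Sum.inl (jOf t))) := by
          apply Quotient.exact (s := S)
          rw [← hjOf t, Quotient.out_eq]
        have e1 := inv1 _ _ heq
        have e2 := inv2 _ _ heq
        simp only [Sum.elim_inr, Sum.elim_inl] at e1 e2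
        rw [e1, e2]
        exact congrArg Fin.val (congrFun hgg t)
      · push_neg at hm
        obtain ⟨x, hx1, hx2⟩ := hm
        have heq : Relation.EqvGen (midRel Q P) (Sum.inr (Sum.inl j)) x :=
          Quotient.exact (s := S) hx1.symm
        have e1 := inv1 _ _ heq
        have e2 := inv2 _ _ heq
        match x with
        | Sum.inl i =>
          simp only [Sum.elim_inr, Sum.elim_inl] at e1 e2
          rw [e1, e2]
        | Sum.inr (Sum.inl j') => exact absurd rfl (hx2 j')
        | Sum.inr (Sum.inr m) =>
          simp only [Sum.elim_inr, Sum.elim_inl] at e1 e2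
          rw [e1, e2]
    have hsurj : Function.Surjective Φ := by
      intro G
      have hfh : ∀ p q : Fin a ⊕ Fin c,
          Quotient.mk S (Sum.map id Sum.inr p) = Quotient.mk S (Sum.map id Sum.inr q) →
            Sum.elim f h p = Sum.elim f h q := by
        intro p q hpq
        obtain ⟨B, hB, hp, hq⟩ := (hR p q).mpr (Quotient.exact (s := S) hpq)
        exact hC B hB p hp q hq
      have forced : ∀ t : Quotient S,
          ¬(∀ x : Fin a ⊕ (Fin b ⊕ Fin c), Quotient.mk S x = t →
              ∃ j : Fin b, x = Sum.inr (Sum.inl j)) →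
            ∃ p : Fin a ⊕ Fin c, Quotient.mk S (Sum.map id Sum.inr p) = t := by
        intro t ht
        push_neg at ht
        obtain ⟨x, hx1, hx2⟩ := ht
        match x with
        | Sum.inl i => exact ⟨Sum.inl i, hx1⟩
        | Sum.inr (Sum.inl j) => exact absurd rfl (hx2 j)
        | Sum.inr (Sum.inr m) => exact ⟨Sum.inr m, hx1⟩
      let val : Quotient S → Fin n := fun t =>
        if ht : ∀ x : Fin a ⊕ (Fin b ⊕ Fin c), Quotient.mk S x = t →
            ∃ j : Fin b, x = Sum.inr (Sum.inl j) then G ⟨t, ht⟩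
        else Sum.elim f h (forced t ht).choose
      let g : Fin b → Fin n := fun j => val (Quotient.mk S (Sum.inr (Sum.inl j)))
      have hEE : ∀ z : Fin a ⊕ (Fin b ⊕ Fin c),
          Sum.elim f (Sum.elim g h) z = val (Quotient.mk S z) := by
        intro z
        match z with
        | Sum.inr (Sum.inl j) => rfl
        | Sum.inl i =>
          have hni : ¬ (∀ x : Fin a ⊕ (Fin b ⊕ Fin c),
              Quotient.mk S x = Quotient.mk S (Sum.inl i) →
                ∃ j : Fin b, x = Sum.inr (Sum.inl j)) := by
            intro hcontra
            obtain ⟨j, hj⟩ := hcontra _ rfl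
            simp at hj
          show f i = val _
          simp only [val, dif_neg hni]
          have := hfh _ (Sum.inl i) ((forced _ hni).choose_spec)
          simpa using this.symm
        | Sum.inr (Sum.inr m) =>
          have hni : ¬ (∀ x : Fin a ⊕ (Fin b ⊕ Fin c),
              Quotient.mk S x = Quotient.mk S (Sum.inr (Sum.inr m)) →
                ∃ j : Fin b, x = Sum.inr (Sum.inl j)) := by
            intro hcontra
            obtain ⟨j, hj⟩ := hcontra _ rfl
            simp at hj
          show h m = val _
          simp only [val, dif_neg hni]
          have := hfh _ (Sum.inr m) ((forced _ hni).choose_spec)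
          simpa using this.symm
      have hvalid : Compatible Q f g ∧ Compatible P g h := by
        rw [compat_iff Q P f g h]
        intro x y hxy
        rw [hEE, hEE,
          Quotient.sound (s := S) (Relation.EqvGen.rel _ _ hxy)]
      refine ⟨⟨g, hvalid⟩, ?_⟩
      funext t
      show g (jOf t) = G t
      show val (Quotient.mk S (Sum.inr (Sum.inl (jOf t)))) = G t
      have h1 : Quotient.mk S (Sum.inr (Sum.inl (jOf t))) = t.1 := by
        rw [← hjOf t]; exact Quotient.out_eq t.1
      rw [h1]
      simp only [val, dif_pos t.2]
      rfl
    have hcard := Fintype.card_of_bijective ⟨hinj, hsurj⟩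
    rw [hcard, Fintype.card_fun, Fintype.card_fin, alphaPQ, Nat.card_eq_fintype_card]
  · rw [if_neg hC]
    rw [Fintype.card_eq_zero_iff]
    constructor
    rintro ⟨g, hg⟩
    apply hC
    intro B hB u hu v hv
    have heq := (hR u v).mp ⟨B, hB, hu, hv⟩
    have := eqvGen_invariant ((compat_iff Q P f g h).mp hg) _ _ heq
    rwa [map_elim, map_elim] at this

end Aux

/-- composition of the maps associated to partition diagrams,
with `t = n`: `T_P ∘ T_Q = n^{α(P,Q)} · T_{P⋆Q}`, where `P⋆Q` is any partition
diagram of type `(a,c)` whose blocks are given by the generated equivalence relation. -/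
theorem stmt5 (k : Type*) [CommRing k] (n : ℕ) (hn : 0 < n) {a b c : ℕ}
    (Q : PartitionDiagram a b) (P : PartitionDiagram b c)
    (R : PartitionDiagram a c)
    (hR : ∀ x y : Fin a ⊕ Fin c,
      (∃ B ∈ R.parts, x ∈ B ∧ y ∈ B) ↔
        Relation.EqvGen (midRel Q P)
          (Sum.map id Sum.inr x) (Sum.map id Sum.inr y)) :
    (TP k n P).comp (TP k n Q) = ((n : k) ^ alphaPQ Q P) • TP k n R := by
  apply LinearMap.ext
  intro x
  funext w
  show ∑ g : Fin b → Fin n, (if Compatible P g w then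
      ∑ f : Fin a → Fin n, (if Compatible Q f g then x f else 0) else 0) =
    ((n : k) ^ alphaPQ Q P) •
      ∑ f : Fin a → Fin n, (if Compatible R f w then x f else 0)
  have step1 : ∀ g : Fin b → Fin n,
      (if Compatible P g w then
        ∑ f : Fin a → Fin n, (if Compatible Q f g then x f else 0) else 0)
      = ∑ f : Fin a → Fin n,
          (if Compatible Q f g ∧ Compatible P g w then x f else 0) := by
    intro g
    split_ifs with hP
    · exact Finset.sum_congr rfl fun f _ => by simp [hP]
    · exact (Finset.sum_eq_zero fun f _ => by simp [hP]).symm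
  rw [Finset.sum_congr rfl fun g _ => step1 g, Finset.sum_comm, Finset.smul_sum]
  refine Finset.sum_congr rfl fun f _ => ?_
  have hcnt := count_valid Q P f w R hR
  have : ∑ g : Fin b → Fin n,
      (if Compatible Q f g ∧ Compatible P g w then x f else 0)
      = (Finset.univ.filter
          (fun g : Fin b → Fin n => Compatible Q f g ∧ Compatible P g w)).card • x f := by
    rw [Finset.sum_ite, Finset.sum_const, Finset.sum_const_zero, add_zero]
  rw [this, ← Fintype.card_subtype, hcnt]
  split_ifs with hCR
  · simp [nsmul_eq_mul, smul_eq_mul]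
  · simp
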